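/- For the FAR(1) process with ‖Φ‖_L < 1 and approximation X_t^{(m)} = Σ_{j=0}^{m−1} Φ^j(ε_{t−j}) + Σ_{j=m}^∞ Φ^j(ε^{(m)}_{t−j}) built from independent copies ε^{(m)} of the innovations, the approximation error satisfies υ₄(X_t − X_t^{(m)}) ≤ 2 · (‖Φ‖_L^m / (1 − ‖Φ‖_L)) · υ₄(ε₀), hence Σ_{m=1}^∞ υ₄(X_t − X_t^{(m)}) < ∞. -/

import Mathlib

open MeasureTheory
open scoped ENNReal NNReal

lemma far1_aux_eLpNorm_eq {Ω : Type*} [MeasurableSpace Ω] (μ : Measure Ω)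
    {H : Type*} [NormedAddCommGroup H] (f : Ω → H) :
    eLpNorm f 4 μ = (∫⁻ ω, (‖f ω‖₊ : ℝ≥0∞) ^ (4 : ℕ) ∂μ) ^ ((1:ℝ)/4) := by
  rw [eLpNorm_eq_lintegral_rpow_enorm_toReal (by norm_num) (by norm_num)]
  simp only [enorm_eq_nnnorm]
  norm_num

lemma far1_aux_integral_eq {Ω : Type*} [MeasurableSpace Ω] (μ : Measure Ω)
    {H : Type*} [NormedAddCommGroup H] (f : Ω → H) (hf : AEStronglyMeasurable f μ) :
    (∫ ω, ‖f ω‖ ^ 4 ∂μ) ^ ((1 : ℝ) / 4) = (eLpNorm f 4 μ).toReal := by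
  have hm : AEStronglyMeasurable (fun ω => ‖f ω‖ ^ 4) μ := (hf.norm.pow 4)
  have h1 : ∫ ω, ‖f ω‖ ^ 4 ∂μ = (∫⁻ ω, (‖f ω‖₊ : ℝ≥0∞) ^ (4 : ℕ) ∂μ).toReal := by
    rw [integral_eq_lintegral_of_nonneg_ae
      (Filter.Eventually.of_forall fun ω => by positivity) hm]
    congr 1
    refine lintegral_congr fun ω => ?_
    rw [ENNReal.ofReal_pow (norm_nonneg _), ofReal_norm, enorm_eq_nnnorm]
  rw [h1, far1_aux_eLpNorm_eq, ← ENNReal.toReal_rpow]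

set_option maxHeartbeats 1000000 in
/-- For the FAR(1) process with `‖Φ‖_L < 1` and the `m`-dependent approximation
`X_t^{(m)} = ∑_{j<m} Φ^j (ε_{t-j}) + ∑_{j≥m} Φ^j (ε^{(m)}_{t-j})` built from independent copies
of the innovations, `υ₄(X_t − X_t^{(m)}) ≤ 2 ‖Φ‖^m/(1−‖Φ‖) ⬝ υ₄(ε₀)`, hence
`∑_{m=1}^∞ υ₄(X_t − X_t^{(m)}) < ∞`. -/
theorem far1_m_dependent_approximation
    {H : Type*} [NormedAddCommGroup H] [InnerProductSpace ℝ H] [CompleteSpace H]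
    [TopologicalSpace.SeparableSpace H] [MeasurableSpace H] [BorelSpace H]
    {Ω : Type*} [MeasurableSpace Ω] (μ : Measure Ω) [IsProbabilityMeasure μ]
    (Φ : H →L[ℝ] H) (hΦ : ‖Φ‖ < 1)
    (ε : ℤ → Ω → H) (hmeas : ∀ t, Measurable (ε t))
    (hindep : ProbabilityTheory.iIndepFun ε μ)
    (hident : ∀ t, Measure.map (ε t) μ = Measure.map (ε 0) μ)
    (hmean : ∀ t, ∫ ω, ε t ω ∂μ = 0)
    (hmom : Integrable (fun ω => ‖ε 0 ω‖ ^ 4) μ)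
    -- independent copies of the innovation sequence, one copy for each m
    (ε' : ℕ → ℤ → Ω → H) (hmeas' : ∀ m t, Measurable (ε' m t))
    (hident' : ∀ m t, Measure.map (ε' m t) μ = Measure.map (ε 0) μ)
    (t : ℤ) (X : Ω → H) (Xm : ℕ → Ω → H)
    (hX : ∀ ω, HasSum (fun j : ℕ => (Φ ^ j) (ε (t - j) ω)) (X ω))
    (hXm : ∀ m ω, HasSum
      (fun j : ℕ => if j < m then (Φ ^ j) (ε (t - j) ω) else (Φ ^ j) (ε' m (t - j) ω))
      (Xm m ω)) :
    (∀ m : ℕ, (∫ ω, ‖X ω - Xm m ω‖ ^ 4 ∂μ) ^ ((1 : ℝ) / 4) ≤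
        2 * (‖Φ‖ ^ m / (1 - ‖Φ‖)) * (∫ ω, ‖ε 0 ω‖ ^ 4 ∂μ) ^ ((1 : ℝ) / 4)) ∧
      Summable (fun m : ℕ => (∫ ω, ‖X ω - Xm m ω‖ ^ 4 ∂μ) ^ ((1 : ℝ) / 4)) := by
  have hΦ0 : (0:ℝ) ≤ ‖Φ‖ := norm_nonneg _
  have h1Φ : (0:ℝ) < 1 - ‖Φ‖ := by linarith
  set e : ℝ≥0∞ := eLpNorm (ε 0) 4 μ with he
  -- e is finite
  have he_fin : e ≠ ∞ := by
    rw [he, far1_aux_eLpNorm_eq]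
    refine (ENNReal.rpow_lt_top_of_nonneg (by norm_num) ?_).ne
    have h4 := hmom.2
    simp only [HasFiniteIntegral] at h4
    refine (lt_of_le_of_lt (le_of_eq ?_) h4).ne
    refine lintegral_congr fun ω => ?_
    simp [nnnorm_pow, nnnorm_norm]
    rw [enorm_eq_nnnorm]
  -- equality of L⁴ norms under equality of distribution
  have hsnorm_eq : ∀ (f : Ω → H), Measurable f →
      Measure.map f μ = Measure.map (ε 0) μ → eLpNorm f 4 μ = e := by
    intro f hf hmap
    have h1 : eLpNorm (id : H → H) 4 (Measure.map f μ) = eLpNorm (id ∘ f) 4 μ :=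
      eLpNorm_map_measure stronglyMeasurable_id.aestronglyMeasurable hf.aemeasurable
    have h2 : eLpNorm (id : H → H) 4 (Measure.map (ε 0) μ) = eLpNorm (id ∘ (ε 0)) 4 μ :=
      eLpNorm_map_measure stronglyMeasurable_id.aestronglyMeasurable (hmeas 0).aemeasurable
    rw [hmap, h2] at h1
    simpa [Function.id_comp] using h1.symm
  -- operator norm bound for powers
  have hop : ∀ (j : ℕ) (x : H), ‖(Φ^j) x‖ ≤ ‖Φ‖^j * ‖x‖ := by
    intro j
    induction j with
    | zero => intro x; simp
    | succ n ih =>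
      intro x
      rw [pow_succ, pow_succ]
      calc ‖(Φ^n * Φ) x‖ = ‖(Φ^n) (Φ x)‖ := rfl
        _ ≤ ‖Φ‖^n * ‖Φ x‖ := ih _
        _ ≤ ‖Φ‖^n * (‖Φ‖ * ‖x‖) :=
            mul_le_mul_of_nonneg_left (Φ.le_opNorm x) (pow_nonneg hΦ0 n)
        _ = ‖Φ‖^n * ‖Φ‖ * ‖x‖ := by ring
  set c : ℝ≥0 := ‖Φ‖₊ with hc
  -- the key ENNReal estimate, together with measurability of the difference
  have key : ∀ m : ℕ, Measurable (fun ω => X ω - Xm m ω) ∧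
      eLpNorm (fun ω => X ω - Xm m ω) 4 μ ≤
        ENNReal.ofReal (2 * (‖Φ‖^m / (1 - ‖Φ‖))) * e := by
    intro m
    set g : ℕ → Ω → H := fun j ω => (Φ^j) (ε (t - j) ω) -
      (if j < m then (Φ^j) (ε (t - j) ω) else (Φ^j) (ε' m (t - j) ω)) with hg
    have hgmeas : ∀ j, Measurable (g j) := by
      intro j
      by_cases hj : j < m <;>
        simp only [hg, hj, if_true, if_false] <;>
        exact Measurable.sub ((Φ^j).continuous.measurable.comp (hmeas _))
          (by first
            | exact (Φ^j).continuous.measurable.comp (hmeas _)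
            | exact (Φ^j).continuous.measurable.comp (hmeas' _ _))
    have hsum : ∀ ω, HasSum (fun j => g j ω) (X ω - Xm m ω) :=
      fun ω => (hX ω).sub (hXm m ω)
    have htend : ∀ ω, Filter.Tendsto (fun n => ∑ j ∈ Finset.range n, g j ω)
        Filter.atTop (nhds (X ω - Xm m ω)) := fun ω => (hsum ω).tendsto_sum_nat
    have hSmeas : ∀ n, Measurable (fun ω => ∑ j ∈ Finset.range n, g j ω) :=
      fun n => Finset.measurable_sum _ fun j _ => hgmeas j
    have hdmeas : Measurable (fun ω => X ω - Xm m ω) :=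
      measurable_of_tendsto_metrizable hSmeas
        (tendsto_pi_nhds.2 fun ω => htend ω)
    refine ⟨hdmeas, ?_⟩
    -- bound on each term
    set B : ℕ → ℝ≥0∞ := fun j => if j < m then 0 else (c : ℝ≥0∞)^j * (2*e) with hB
    have hb : ∀ j, eLpNorm (g j) 4 μ ≤ B j := by
      intro j
      by_cases hj : j < m
      · have hz : g j = fun _ => (0 : H) := by
          funext ω; simp [hg, hj]
        rw [hz, hB]
        simp [hj, eLpNorm_zero]
      · have hgj : g j = fun ω => (Φ^j) (ε (t - j) ω - ε' m (t - j) ω) := by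
          funext ω; simp [hg, hj, map_sub]
        have hptw : ∀ᵐ ω ∂μ, ‖g j ω‖₊ ≤ (c^j) * ‖ε (t - j) ω - ε' m (t - j) ω‖₊ := by
          refine Filter.Eventually.of_forall fun ω => ?_
          rw [hgj]
          rw [← NNReal.coe_le_coe]
          push_cast
          simpa [hc] using hop j (ε (t - j) ω - ε' m (t - j) ω)
        have h1 : eLpNorm (g j) 4 μ ≤
            (c^j) • eLpNorm (fun ω => ε (t - j) ω - ε' m (t - j) ω) 4 μ :=
          eLpNorm_le_nnreal_smul_eLpNorm_of_ae_le_mul hptw 4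
        have h2 : eLpNorm (fun ω => ε (t - j) ω - ε' m (t - j) ω) 4 μ ≤ e + e := by
          have := eLpNorm_sub_le (μ := μ) (p := 4)
            (hmeas (t - j)).aestronglyMeasurable (hmeas' m (t - j)).aestronglyMeasurable
            (by norm_num)
          rw [hsnorm_eq _ (hmeas (t - j)) (hident (t - j)),
            hsnorm_eq _ (hmeas' m (t - j)) (hident' m (t - j))] at this
          exact this
        calc eLpNorm (g j) 4 μ ≤ (c^j) • eLpNorm (fun ω => ε (t-j) ω - ε' m (t-j) ω) 4 μ := h1
          _ ≤ (c^j) • (e + e) := by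
              exact smul_le_smul_of_nonneg_left h2 (by positivity)
          _ = B j := by
              rw [hB]
              simp only [hj, if_false, ENNReal.smul_def, smul_eq_mul, two_mul,
                ENNReal.coe_pow]
    -- bound on partial sums, then pass to the limit
    have hSn : ∀ n, eLpNorm (fun ω => ∑ j ∈ Finset.range n, g j ω) 4 μ ≤ ∑' j, B j := by
      intro n
      have hfn : (fun ω => ∑ j ∈ Finset.range n, g j ω) = ∑ j ∈ Finset.range n, g j := by
        funext ω; simp
      rw [hfn]
      calc eLpNorm (∑ j ∈ Finset.range n, g j) 4 μ
          ≤ ∑ j ∈ Finset.range n, eLpNorm (g j) 4 μ :=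
            eLpNorm_sum_le (fun j _ => (hgmeas j).aestronglyMeasurable) (by norm_num)
        _ ≤ ∑ j ∈ Finset.range n, B j := Finset.sum_le_sum fun j _ => hb j
        _ ≤ ∑' j, B j := ENNReal.sum_le_tsum _
    have hlim : eLpNorm (fun ω => X ω - Xm m ω) 4 μ ≤ ∑' j, B j := by
      refine le_trans (Lp.eLpNorm_lim_le_liminf_eLpNorm
        (fun n => (hSmeas n).aestronglyMeasurable) _
        (Filter.Eventually.of_forall htend)) ?_
      exact Filter.liminf_le_of_frequently_le' (Filter.Frequently.of_forall hSn)
    -- compute the tsum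
    have hts : ∑' j, B j = (c : ℝ≥0∞)^m * (1 - (c : ℝ≥0∞))⁻¹ * (2*e) := by
      have hinj : Function.Injective (fun i : ℕ => i + m) := fun a b h => by simpa using h
      have hsupp : Function.support B ⊆ Set.range (fun i : ℕ => i + m) := by
        intro j hj
        rcases le_or_gt m j with h | h
        · exact ⟨j - m, by simp; omega⟩
        · exact absurd (if_pos h) hj
      rw [← hinj.tsum_eq hsupp]
      have hshift : ∀ j, B (j + m) = (c : ℝ≥0∞)^j * ((c : ℝ≥0∞)^m * (2*e)) := by
        intro j
        rw [hB]
        simp only [show ¬ (j + m < m) by omega, if_false, pow_add, mul_assoc]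
      simp_rw [hshift]
      rw [ENNReal.tsum_mul_right, ENNReal.tsum_geometric]
      ring
    -- identify the constant
    have hC : (c : ℝ≥0∞)^m * (1 - (c : ℝ≥0∞))⁻¹ * (2*e) =
        ENNReal.ofReal (2 * (‖Φ‖^m / (1 - ‖Φ‖))) * e := by
      have h1 : ((c : ℝ≥0∞))^m = ENNReal.ofReal (‖Φ‖^m) := by
        rw [ENNReal.ofReal_pow hΦ0, ofReal_norm, enorm_eq_nnnorm, hc]
      have h2 : (1 - (c : ℝ≥0∞))⁻¹ = ENNReal.ofReal (1 - ‖Φ‖)⁻¹ := by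
        rw [ENNReal.ofReal_inv_of_pos h1Φ]
        have hcc : (c : ℝ≥0∞) = ENNReal.ofReal ‖Φ‖ := (ofReal_norm Φ).symm
        rw [ENNReal.ofReal_sub _ hΦ0, ENNReal.ofReal_one, hcc]
      rw [h1, h2, ← ENNReal.ofReal_mul (by positivity),
        show (2 : ℝ≥0∞) = ENNReal.ofReal 2 by norm_num,
        show ENNReal.ofReal (‖Φ‖^m * (1-‖Φ‖)⁻¹) * (ENNReal.ofReal 2 * e) =
          (ENNReal.ofReal (‖Φ‖^m * (1-‖Φ‖)⁻¹) * ENNReal.ofReal 2) * e by ring,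
        ← ENNReal.ofReal_mul (by positivity)]
      congr 2
      rw [div_eq_mul_inv]; ring
    rw [hts, hC] at hlim
    exact hlim
  -- translate back to real numbers
  have hRfin : ∀ m : ℕ, ENNReal.ofReal (2 * (‖Φ‖^m / (1 - ‖Φ‖))) * e ≠ ∞ :=
    fun m => ENNReal.mul_ne_top ENNReal.ofReal_ne_top he_fin
  have part1 : ∀ m : ℕ, (∫ ω, ‖X ω - Xm m ω‖ ^ 4 ∂μ) ^ ((1 : ℝ) / 4) ≤
      2 * (‖Φ‖ ^ m / (1 - ‖Φ‖)) * (∫ ω, ‖ε 0 ω‖ ^ 4 ∂μ) ^ ((1 : ℝ) / 4) := by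
    intro m
    rw [far1_aux_integral_eq μ _ (key m).1.aestronglyMeasurable,
      far1_aux_integral_eq μ _ (hmeas 0).aestronglyMeasurable]
    have := ENNReal.toReal_mono (hRfin m) (key m).2
    rw [ENNReal.toReal_mul, ENNReal.toReal_ofReal (by positivity)] at this
    exact this
  refine ⟨part1, ?_⟩
  have hsummable : Summable (fun m : ℕ =>
      2 * (‖Φ‖ ^ m / (1 - ‖Φ‖)) * (∫ ω, ‖ε 0 ω‖ ^ 4 ∂μ) ^ ((1 : ℝ) / 4)) := by
    have := (summable_geometric_of_lt_one hΦ0 hΦ).mul_left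
      (2 / (1 - ‖Φ‖) * (∫ ω, ‖ε 0 ω‖ ^ 4 ∂μ) ^ ((1 : ℝ) / 4))
    refine this.congr fun m => ?_
    field_simp
  refine Summable.of_nonneg_of_le (fun m => ?_) (fun m => part1 m) hsummable
  exact Real.rpow_nonneg (integral_nonneg fun ω => by positivity) _
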